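/- Let {Λ_i : i ∈ I} be a finite partition of a finite set Λ, and for each i let ν_i be a probability measure on {±1}^{Λ_i}; set ν = ∏_i ν_i. Let μ be the measure on {±1}^Λ obtained by: sampling S ⊂ I from a measure μ̃, sampling the spins on ∪_{i∈S} Λ_i from an arbitrary measure φ_S, and sampling the spins on each Λ_i with i ∉ S independently from ν_i. Then the squared L²(ν)-distance ‖μ − ν‖²_{L²(ν)} = Σ_x (μ(x)−ν(x))²/ν(x) is at most [Σ_{S,S'} μ̃(S) μ̃(S') ∏_{i ∈ S∩S'} (min_{x_i ∈ {±1}^{Λ_i}} ν_i(x_i))^{-1}] − 1, where S, S' range over subsets of I. -/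

import Mathlib

open Finset

section pihelp
variable {ι : Type*} [Fintype ι] [DecidableEq ι] {D : ι → Type*} [∀ i, Fintype (D i)]

theorem split_sum' (p : ι → Prop) [DecidablePred p]
    (H : (∀ i : {x // p x}, D i.1) → (∀ j : {x // ¬ p x}, D j.1) → ℝ) :
    ∑ g : ∀ i, D i, H (fun i => g i.1) (fun j => g j.1) = ∑ a, ∑ b, H a b := by
  calc ∑ g : ∀ i, D i, H (fun i => g i.1) (fun j => g j.1)
      = ∑ g : ∀ i, D i,
        (fun ab : (∀ i : {x // p x}, D i.1) × (∀ j : {x // ¬ p x}, D j.1) => H ab.1 ab.2)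
          (Equiv.piEquivPiSubtypeProd p D g) := rfl
    _ = ∑ ab : (∀ i : {x // p x}, D i.1) × (∀ j : {x // ¬ p x}, D j.1), H ab.1 ab.2 :=
        by exact Equiv.sum_comp (Equiv.piEquivPiSubtypeProd p D) fun ab => H ab.1 ab.2
    _ = ∑ a, ∑ b, H a b := Fintype.sum_prod_type _

theorem split_sum (p : ι → Prop) [DecidablePred p]
    (F : (∀ i : {x // p x}, D i.1) → ℝ) (K : (∀ j : {x // ¬ p x}, D j.1) → ℝ) :
    ∑ g : ∀ i, D i, F (fun i => g i.1) * K (fun j => g j.1) = (∑ a, F a) * (∑ b, K b) := by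
  rw [split_sum' p (fun a b => F a * K b)]
  rw [← Finset.sum_mul_sum]

end pihelp

def glue2' {I : Type*} (S S' : Finset I) (D : I → Type*) [DecidableEq I]
    (a : ∀ i : {x : I // x ∈ S}, D i.1)
    (c : ∀ j : {j : {x : I // x ∉ S} // j.1 ∈ S'}, D j.1.1) :
    ∀ i : {x : I // x ∈ S'}, D i.1 :=
  fun i => if h : i.1 ∈ S then a ⟨i.1, h⟩ else c ⟨⟨i.1, h⟩, i.2⟩

def glue3' {I : Type*} (S : Finset I) {S' : Finset I} (D : I → Type*) [DecidableEq I]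
    (u : ∀ i : {i : {x : I // x ∈ S'} // i.1 ∈ S}, D i.1.1)
    (w : ∀ i : {i : {x : I // x ∈ S'} // ¬ i.1 ∈ S}, D i.1.1) :
    ∀ i : {x : I // x ∈ S'}, D i.1 :=
  fun i => if h : i.1 ∈ S then u ⟨i, h⟩ else w ⟨i, h⟩

def pitrans {I : Type*} (S S' : Finset I) (D : I → Type*) :
    (∀ j : {j : {x : I // x ∉ S} // j.1 ∈ S'}, D j.1.1) ≃
      (∀ i : {i : {x : I // x ∈ S'} // ¬ i.1 ∈ S}, D i.1.1) where
  toFun c i := c ⟨⟨i.1.1, i.2⟩, i.1.2⟩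
  invFun w j := w ⟨⟨j.1.1, j.2⟩, j.1.2⟩
  left_inv _ := rfl
  right_inv _ := rfl

def complEquiv {I : Type*} [DecidableEq I] (S S' : Finset I) :
    {j : {x : I // ¬ x ∈ S} // ¬ j.1 ∈ S'} ≃ {x : I // ¬ x ∈ S ∪ S'} where
  toFun j := ⟨j.1.1, fun h => ((Finset.mem_union.mp h).elim j.1.2 j.2)⟩
  invFun x := ⟨⟨x.1, fun h => x.2 (Finset.mem_union_left _ h)⟩,
    fun h => x.2 (Finset.mem_union_right _ h)⟩
  left_inv _ := rfl
  right_inv _ := rfl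

theorem aux_bound {I : Type*} [Fintype I] [DecidableEq I] (D : I → Type*)
    [∀ i, Fintype (D i)] [∀ i, Nonempty (D i)]
    (ν : ∀ i, D i → ℝ) (hνpos : ∀ i d, 0 < ν i d) (hν1 : ∀ i, ∑ d, ν i d = 1)
    (μt : Finset I → ℝ) (hμt0 : ∀ S, 0 ≤ μt S) (hμt1 : ∑ S : Finset I, μt S = 1)
    (Φ : ∀ S : Finset I, (∀ i : {x : I // x ∈ S}, D i.1) → ℝ)
    (hΦ0 : ∀ S a, 0 ≤ Φ S a) (hΦ1 : ∀ S, ∑ a, Φ S a = 1) :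
    ∑ g : ∀ i, D i,
      ((∑ S : Finset I, μt S * Φ S (fun i => g i.1) * ∏ i ∈ Sᶜ, ν i (g i))
        - ∏ i, ν i (g i)) ^ 2 / ∏ i, ν i (g i) ≤
      (∑ S : Finset I, ∑ S' : Finset I,
        μt S * μt S' * ∏ i ∈ S ∩ S', (⨅ d, ν i d)⁻¹) - 1 := by
  classical
  set m : I → ℝ := fun i => ⨅ d, ν i d with hm_def
  have hν' : ∀ g : ∀ i, D i, 0 < ∏ i, ν i (g i) :=
    fun g => Finset.prod_pos fun i _ => hνpos i _
  have hm_le : ∀ i (d : D i), m i ≤ ν i d := fun i d =>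
    ciInf_le (Finite.bddBelow_range _) d
  have hm_pos : ∀ i, 0 < m i := by
    intro i
    obtain ⟨d, hd⟩ := Finite.exists_min (ν i)
    exact lt_of_lt_of_le (hνpos i d) (le_ciInf hd)
  have hsub : ∀ (T : Finset I) (f : I → ℝ),
      ∏ j : {x : I // ¬ x ∈ T}, f j.1 = ∏ i ∈ Tᶜ, f i := by
    intro T f
    exact (Finset.prod_subtype Tᶜ (fun x => Finset.mem_compl) f).symm
  have hν'1 : ∑ g : ∀ i, D i, ∏ i, ν i (g i) = 1 := by
    rw [← Fintype.prod_sum]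
    simp [hν1]
  have hψ1 : ∀ S : Finset I,
      ∑ g : ∀ i, D i, Φ S (fun i => g i.1) * ∏ i ∈ Sᶜ, ν i (g i) = 1 := by
    intro S
    have h2 := split_sum (D := D) (fun x => x ∈ S) (Φ S)
      (fun b => ∏ j : {x : I // ¬ x ∈ S}, ν j.1 (b j))
    simp only [] at h2
    calc ∑ g : ∀ i, D i, Φ S (fun i => g i.1) * ∏ i ∈ Sᶜ, ν i (g i)
        = ∑ g : ∀ i, D i, Φ S (fun i => g i.1) *
            ∏ j : {x : I // ¬ x ∈ S}, ν j.1 (g j.1) := by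
          exact Finset.sum_congr rfl fun g _ => by rw [hsub S (fun i => ν i (g i))]
      _ = (∑ a, Φ S a) * ∑ b : ∀ j : {x : I // ¬ x ∈ S}, D j.1,
            ∏ j : {x : I // ¬ x ∈ S}, ν j.1 (b j) := by convert h2 using 2; congr!
      _ = 1 := by
          rw [hΦ1, one_mul, ← Fintype.prod_sum]
          simp [hν1]
  have hμ'1 : ∑ g : ∀ i, D i,
      (∑ S : Finset I, μt S * Φ S (fun i => g i.1) * ∏ i ∈ Sᶜ, ν i (g i)) = 1 := by
    rw [Finset.sum_comm]
    calc ∑ S : Finset I, ∑ g : ∀ i, D i, μt S * Φ S (fun i => g i.1) * ∏ i ∈ Sᶜ, ν i (g i)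
        = ∑ S : Finset I, μt S := by
          refine Finset.sum_congr rfl fun S _ => ?_
          calc ∑ g : ∀ i, D i, μt S * Φ S (fun i => g i.1) * ∏ i ∈ Sᶜ, ν i (g i)
              = μt S * ∑ g : ∀ i, D i, Φ S (fun i => g i.1) * ∏ i ∈ Sᶜ, ν i (g i) := by
                rw [Finset.mul_sum]
                exact Finset.sum_congr rfl fun g _ => by ring
            _ = μt S := by rw [hψ1 S, mul_one]
      _ = 1 := hμt1
  have hA : ∀ (S S' : Finset I) (g : ∀ i, D i),
      (∏ i ∈ Sᶜ, ν i (g i)) * (∏ i ∈ S'ᶜ, ν i (g i)) / ∏ i, ν i (g i)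
        = (∏ i ∈ (S ∪ S')ᶜ, ν i (g i)) * ∏ i ∈ S ∩ S', (ν i (g i))⁻¹ := by
    intro S S' g
    have u1 : (S ∪ S') \ S' = S \ S' := by ext i; simp; try tauto
    have u2 : S' \ (S ∩ S') = S' \ S := by ext i; simp; try tauto
    have u3 : Sᶜ \ (S ∪ S')ᶜ = S' \ S := by ext i; simp; try tauto
    have u4 : S'ᶜ \ (S ∪ S')ᶜ = S \ S' := by ext i; simp; try tauto
    have c1 : (S ∪ S')ᶜ ⊆ Sᶜ := Finset.compl_subset_compl.mpr Finset.subset_union_left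
    have c2 : (S ∪ S')ᶜ ⊆ S'ᶜ := Finset.compl_subset_compl.mpr Finset.subset_union_right
    have e1 : ∏ i ∈ Sᶜ, ν i (g i)
        = (∏ i ∈ S' \ S, ν i (g i)) * ∏ i ∈ (S ∪ S')ᶜ, ν i (g i) := by
      rw [← Finset.prod_sdiff c1, u3]
    have e2 : ∏ i ∈ S'ᶜ, ν i (g i)
        = (∏ i ∈ S \ S', ν i (g i)) * ∏ i ∈ (S ∪ S')ᶜ, ν i (g i) := by
      rw [← Finset.prod_sdiff c2, u4]
    have e3 : ∏ i, ν i (g i)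
        = ((∏ i ∈ S \ S', ν i (g i)) * ((∏ i ∈ S' \ S, ν i (g i)) *
            ∏ i ∈ S ∩ S', ν i (g i))) * ∏ i ∈ (S ∪ S')ᶜ, ν i (g i) := by
      rw [← Finset.prod_mul_prod_compl (S ∪ S') (fun i => ν i (g i))]
      congr 1
      rw [← Finset.prod_sdiff (Finset.subset_union_right (s₁ := S) (s₂ := S')), u1]
      congr 1
      rw [← Finset.prod_sdiff (Finset.inter_subset_right (s₁ := S) (s₂ := S')), u2]
    have p1 : (0:ℝ) < ∏ i ∈ S \ S', ν i (g i) := Finset.prod_pos fun i _ => hνpos i _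
    have p2 : (0:ℝ) < ∏ i ∈ S' \ S, ν i (g i) := Finset.prod_pos fun i _ => hνpos i _
    have p3 : (0:ℝ) < ∏ i ∈ S ∩ S', ν i (g i) := Finset.prod_pos fun i _ => hνpos i _
    have p4 : (0:ℝ) < ∏ i ∈ (S ∪ S')ᶜ, ν i (g i) := Finset.prod_pos fun i _ => hνpos i _
    rw [e1, e2, e3, Finset.prod_inv_distrib]
    rw [div_eq_iff (ne_of_gt (mul_pos (mul_pos p1 (mul_pos p2 p3)) p4))]
    field_simp
  have hC : ∀ S S' : Finset I,
      ∑ g : ∀ i, D i, Φ S (fun i => g i.1) * Φ S' (fun i => g i.1) *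
        ∏ i ∈ (S ∪ S')ᶜ, ν i (g i) ≤ 1 := by
    intro S S'
    have hdp : ∀ f : I → ℝ,
        ∏ j' : {j : {x : I // ¬ x ∈ S} // ¬ j.1 ∈ S'}, f j'.1.1 = ∏ i ∈ (S ∪ S')ᶜ, f i := by
      intro f
      rw [Finset.prod_subtype (S ∪ S')ᶜ (fun x => Finset.mem_compl) f]
      exact Fintype.prod_equiv (complEquiv S S') _ _ fun j => rfl
    have hW : ∀ a : ∀ i : {x : I // x ∈ S}, D i.1,
        (∑ b : ∀ j : {x : I // ¬ x ∈ S}, D j.1,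
          Φ S' (glue2' S S' D a (fun j' => b j'.1)) *
            ∏ j' : {j : {x : I // ¬ x ∈ S} // ¬ j.1 ∈ S'}, ν j'.1.1 (b j'.1)) ≤ 1 := by
      intro a
      have h2 := split_sum (ι := {x : I // ¬ x ∈ S}) (D := fun j => D j.1)
        (fun j => j.1 ∈ S') (fun c => Φ S' (glue2' S S' D a c))
        (fun d => ∏ j' : {j : {x : I // ¬ x ∈ S} // ¬ j.1 ∈ S'}, ν j'.1.1 (d j'))
      have hsum1 : (∑ d : ∀ j' : {j : {x : I // ¬ x ∈ S} // ¬ j.1 ∈ S'}, D j'.1.1,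
          ∏ j' : {j : {x : I // ¬ x ∈ S} // ¬ j.1 ∈ S'}, ν j'.1.1 (d j')) = 1 := by
        rw [← Fintype.prod_sum]
        simp [hν1]
      have h5 : (∑ c : ∀ j' : {j : {x : I // ¬ x ∈ S} // j.1 ∈ S'}, D j'.1.1,
            Φ S' (glue2' S S' D a c))
          = ∑ w : ∀ i : {i : {x : I // x ∈ S'} // ¬ i.1 ∈ S}, D i.1.1,
            Φ S' (glue3' S D (fun i => a ⟨i.1.1, i.2⟩) w) := by
        refine Fintype.sum_equiv (pitrans S S' D) _ _ fun c => ?_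
        refine congrArg (Φ S') (funext fun i => ?_)
        by_cases h : (i : I) ∈ S <;> simp [glue2', glue3', pitrans, h]
      have h3 := split_sum' (ι := {x : I // x ∈ S'}) (D := fun i => D i.1)
        (fun i => i.1 ∈ S) (fun u w => Φ S' (glue3' S D u w))
      have h4 : (∑ a' : ∀ i : {x : I // x ∈ S'}, D i.1, Φ S' a')
          = ∑ u, ∑ w, Φ S' (glue3' S D u w) := by
        rw [← h3]
        refine Finset.sum_congr rfl fun a' _ => congrArg (Φ S') ?_
        funext i
        by_cases h : (i : I) ∈ S <;> simp [glue3', h]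
      have hpart : (∑ c : ∀ j' : {j : {x : I // ¬ x ∈ S} // j.1 ∈ S'}, D j'.1.1,
          Φ S' (glue2' S S' D a c)) ≤ 1 := by
        calc (∑ c : ∀ j' : {j : {x : I // ¬ x ∈ S} // j.1 ∈ S'}, D j'.1.1,
              Φ S' (glue2' S S' D a c))
            = ∑ w : ∀ i : {i : {x : I // x ∈ S'} // ¬ i.1 ∈ S}, D i.1.1,
              Φ S' (glue3' S D (fun i => a ⟨i.1.1, i.2⟩) w) := h5
          _ ≤ ∑ u, ∑ w, Φ S' (glue3' S D u w) :=
              Finset.single_le_sum (f := fun u => ∑ w, Φ S' (glue3' S D u w))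
                (fun u _ => Finset.sum_nonneg fun w _ => hΦ0 _ _) (Finset.mem_univ _)
          _ = ∑ a' : ∀ i : {x : I // x ∈ S'}, D i.1, Φ S' a' := h4.symm
          _ = 1 := hΦ1 S'
      calc (∑ b : ∀ j : {x : I // ¬ x ∈ S}, D j.1,
            Φ S' (glue2' S S' D a (fun j' => b j'.1)) *
              ∏ j' : {j : {x : I // ¬ x ∈ S} // ¬ j.1 ∈ S'}, ν j'.1.1 (b j'.1))
          = (∑ c : ∀ j' : {j : {x : I // ¬ x ∈ S} // j.1 ∈ S'}, D j'.1.1,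
              Φ S' (glue2' S S' D a c)) *
            ∑ d : ∀ j' : {j : {x : I // ¬ x ∈ S} // ¬ j.1 ∈ S'}, D j'.1.1,
              ∏ j' : {j : {x : I // ¬ x ∈ S} // ¬ j.1 ∈ S'}, ν j'.1.1 (d j') := by
            exact h2
        _ ≤ 1 := by rw [hsum1, mul_one]; exact hpart
    have key : ∑ g : ∀ i, D i, Φ S (fun i => g i.1) * Φ S' (fun i => g i.1) *
        ∏ i ∈ (S ∪ S')ᶜ, ν i (g i)
      = ∑ a : ∀ i : {x : I // x ∈ S}, D i.1, Φ S a *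
          ∑ b : ∀ j : {x : I // ¬ x ∈ S}, D j.1,
            Φ S' (glue2' S S' D a (fun j' => b j'.1)) *
              ∏ j' : {j : {x : I // ¬ x ∈ S} // ¬ j.1 ∈ S'}, ν j'.1.1 (b j'.1) := by
      have h6 := split_sum' (ι := I) (D := D) (fun x => x ∈ S)
        (fun a b => Φ S a * (Φ S' (glue2' S S' D a (fun j' => b j'.1)) *
          ∏ j' : {j : {x : I // ¬ x ∈ S} // ¬ j.1 ∈ S'}, ν j'.1.1 (b j'.1)))
      calc ∑ g : ∀ i, D i, Φ S (fun i => g i.1) * Φ S' (fun i => g i.1) *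
            ∏ i ∈ (S ∪ S')ᶜ, ν i (g i)
          = ∑ g : ∀ i, D i, Φ S (fun i => g i.1) *
              (Φ S' (glue2' S S' D (fun i => g i.1) (fun j' => g j'.1.1)) *
                ∏ j' : {j : {x : I // ¬ x ∈ S} // ¬ j.1 ∈ S'}, ν j'.1.1 (g j'.1.1)) := by
            refine Finset.sum_congr rfl fun g _ => ?_
            rw [← hdp (fun i => ν i (g i)), mul_assoc]
            congr 2
            refine congrArg (Φ S') (funext fun i => ?_)
            by_cases h : (i : I) ∈ S <;> simp [glue2', h]
        _ = ∑ a : ∀ i : {x : I // x ∈ S}, D i.1, ∑ b : ∀ j : {x : I // ¬ x ∈ S}, D j.1,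
              Φ S a * (Φ S' (glue2' S S' D a (fun j' => b j'.1)) *
              ∏ j' : {j : {x : I // ¬ x ∈ S} // ¬ j.1 ∈ S'}, ν j'.1.1 (b j'.1)) := by
            convert h6 using 2; congr!
        _ = ∑ a : ∀ i : {x : I // x ∈ S}, D i.1, Φ S a *
              ∑ b : ∀ j : {x : I // ¬ x ∈ S}, D j.1,
                Φ S' (glue2' S S' D a (fun j' => b j'.1)) *
                  ∏ j' : {j : {x : I // ¬ x ∈ S} // ¬ j.1 ∈ S'}, ν j'.1.1 (b j'.1) := by
            exact Finset.sum_congr rfl fun a _ => (Finset.mul_sum _ _ _).symm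
    rw [key]
    calc (∑ a : ∀ i : {x : I // x ∈ S}, D i.1, Φ S a *
          ∑ b : ∀ j : {x : I // ¬ x ∈ S}, D j.1,
            Φ S' (glue2' S S' D a (fun j' => b j'.1)) *
              ∏ j' : {j : {x : I // ¬ x ∈ S} // ¬ j.1 ∈ S'}, ν j'.1.1 (b j'.1))
        ≤ ∑ a : ∀ i : {x : I // x ∈ S}, D i.1, Φ S a * 1 :=
          Finset.sum_le_sum fun a _ => mul_le_mul_of_nonneg_left (hW a) (hΦ0 S a)
      _ = 1 := by simp only [mul_one]; exact hΦ1 S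
  have hM : ∑ g : ∀ i, D i,
      (∑ S : Finset I, μt S * Φ S (fun i => g i.1) * ∏ i ∈ Sᶜ, ν i (g i)) ^ 2 / ∏ i, ν i (g i)
      ≤ ∑ S : Finset I, ∑ S' : Finset I, μt S * μt S' * ∏ i ∈ S ∩ S', (m i)⁻¹ := by
    have expand : ∀ g : ∀ i, D i,
        (∑ S : Finset I, μt S * Φ S (fun i => g i.1) * ∏ i ∈ Sᶜ, ν i (g i)) ^ 2 / ∏ i, ν i (g i)
        = ∑ S : Finset I, ∑ S' : Finset I,
            (μt S * Φ S (fun i => g i.1) * ∏ i ∈ Sᶜ, ν i (g i)) *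
              (μt S' * Φ S' (fun i => g i.1) * ∏ i ∈ S'ᶜ, ν i (g i)) / ∏ i, ν i (g i) := by
      intro g
      rw [sq, Finset.sum_mul_sum, Finset.sum_div]
      exact Finset.sum_congr rfl fun S _ => by rw [Finset.sum_div]
    calc ∑ g : ∀ i, D i,
        (∑ S : Finset I, μt S * Φ S (fun i => g i.1) * ∏ i ∈ Sᶜ, ν i (g i)) ^ 2 / ∏ i, ν i (g i)
        = ∑ g : ∀ i, D i, ∑ S : Finset I, ∑ S' : Finset I,
            (μt S * Φ S (fun i => g i.1) * ∏ i ∈ Sᶜ, ν i (g i)) *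
              (μt S' * Φ S' (fun i => g i.1) * ∏ i ∈ S'ᶜ, ν i (g i)) / ∏ i, ν i (g i) :=
          Finset.sum_congr rfl fun g _ => expand g
      _ = ∑ S : Finset I, ∑ S' : Finset I, ∑ g : ∀ i, D i,
            (μt S * Φ S (fun i => g i.1) * ∏ i ∈ Sᶜ, ν i (g i)) *
              (μt S' * Φ S' (fun i => g i.1) * ∏ i ∈ S'ᶜ, ν i (g i)) / ∏ i, ν i (g i) := by
          rw [Finset.sum_comm]
          exact Finset.sum_congr rfl fun S _ => Finset.sum_comm
      _ ≤ ∑ S : Finset I, ∑ S' : Finset I, μt S * μt S' * ∏ i ∈ S ∩ S', (m i)⁻¹ := by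
          refine Finset.sum_le_sum fun S _ => Finset.sum_le_sum fun S' _ => ?_
          have hMnn : (0:ℝ) ≤ ∏ i ∈ S ∩ S', (m i)⁻¹ :=
            Finset.prod_nonneg fun i _ => inv_nonneg.mpr (le_of_lt (hm_pos i))
          calc ∑ g : ∀ i, D i,
              (μt S * Φ S (fun i => g i.1) * ∏ i ∈ Sᶜ, ν i (g i)) *
                (μt S' * Φ S' (fun i => g i.1) * ∏ i ∈ S'ᶜ, ν i (g i)) / ∏ i, ν i (g i)
              = ∑ g : ∀ i, D i, μt S * μt S' *
                  (Φ S (fun i => g i.1) * Φ S' (fun i => g i.1) *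
                    ((∏ i ∈ Sᶜ, ν i (g i)) * (∏ i ∈ S'ᶜ, ν i (g i)) / ∏ i, ν i (g i))) :=
                Finset.sum_congr rfl fun g _ => by ring
            _ = ∑ g : ∀ i, D i, μt S * μt S' *
                  (Φ S (fun i => g i.1) * Φ S' (fun i => g i.1) *
                    ((∏ i ∈ (S ∪ S')ᶜ, ν i (g i)) * ∏ i ∈ S ∩ S', (ν i (g i))⁻¹)) :=
                Finset.sum_congr rfl fun g _ => by rw [hA S S' g]
            _ ≤ ∑ g : ∀ i, D i, μt S * μt S' *
                  ((∏ i ∈ S ∩ S', (m i)⁻¹) *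
                    (Φ S (fun i => g i.1) * Φ S' (fun i => g i.1) *
                      ∏ i ∈ (S ∪ S')ᶜ, ν i (g i))) := by
                refine Finset.sum_le_sum fun g _ => ?_
                refine mul_le_mul_of_nonneg_left ?_ (mul_nonneg (hμt0 S) (hμt0 S'))
                have hR : (∏ i ∈ S ∩ S', (ν i (g i))⁻¹) ≤ ∏ i ∈ S ∩ S', (m i)⁻¹ :=
                  Finset.prod_le_prod
                    (fun i _ => inv_nonneg.mpr (le_of_lt (hνpos i _)))
                    (fun i _ => inv_anti₀ (hm_pos i) (hm_le i _))
                have hXnn : (0:ℝ) ≤ Φ S (fun i => g i.1) * Φ S' (fun i => g i.1) *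
                    ∏ i ∈ (S ∪ S')ᶜ, ν i (g i) :=
                  mul_nonneg (mul_nonneg (hΦ0 _ _) (hΦ0 _ _))
                    (Finset.prod_nonneg fun i _ => le_of_lt (hνpos i _))
                calc Φ S (fun i => g i.1) * Φ S' (fun i => g i.1) *
                      ((∏ i ∈ (S ∪ S')ᶜ, ν i (g i)) * ∏ i ∈ S ∩ S', (ν i (g i))⁻¹)
                    = (Φ S (fun i => g i.1) * Φ S' (fun i => g i.1) *
                        ∏ i ∈ (S ∪ S')ᶜ, ν i (g i)) * ∏ i ∈ S ∩ S', (ν i (g i))⁻¹ := by ring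
                  _ ≤ (Φ S (fun i => g i.1) * Φ S' (fun i => g i.1) *
                        ∏ i ∈ (S ∪ S')ᶜ, ν i (g i)) * ∏ i ∈ S ∩ S', (m i)⁻¹ :=
                      mul_le_mul_of_nonneg_left hR hXnn
                  _ = (∏ i ∈ S ∩ S', (m i)⁻¹) *
                        (Φ S (fun i => g i.1) * Φ S' (fun i => g i.1) *
                          ∏ i ∈ (S ∪ S')ᶜ, ν i (g i)) := by ring
            _ = (μt S * μt S' * ∏ i ∈ S ∩ S', (m i)⁻¹) *
                  ∑ g : ∀ i, D i, Φ S (fun i => g i.1) * Φ S' (fun i => g i.1) *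
                    ∏ i ∈ (S ∪ S')ᶜ, ν i (g i) := by
                rw [Finset.mul_sum]
                exact Finset.sum_congr rfl fun g _ => by ring
            _ ≤ (μt S * μt S' * ∏ i ∈ S ∩ S', (m i)⁻¹) * 1 :=
                mul_le_mul_of_nonneg_left (hC S S')
                  (mul_nonneg (mul_nonneg (hμt0 S) (hμt0 S')) hMnn)
            _ = μt S * μt S' * ∏ i ∈ S ∩ S', (m i)⁻¹ := mul_one _
  have expand2 : ∀ g : ∀ i, D i,
      ((∑ S : Finset I, μt S * Φ S (fun i => g i.1) * ∏ i ∈ Sᶜ, ν i (g i))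
          - ∏ i, ν i (g i)) ^ 2 / ∏ i, ν i (g i)
      = (∑ S : Finset I, μt S * Φ S (fun i => g i.1) * ∏ i ∈ Sᶜ, ν i (g i)) ^ 2 / ∏ i, ν i (g i)
        - 2 * (∑ S : Finset I, μt S * Φ S (fun i => g i.1) * ∏ i ∈ Sᶜ, ν i (g i))
        + ∏ i, ν i (g i) := by
    intro g
    have h := (hν' g).ne'
    field_simp
    ring
  calc ∑ g : ∀ i, D i,
      ((∑ S : Finset I, μt S * Φ S (fun i => g i.1) * ∏ i ∈ Sᶜ, ν i (g i))
          - ∏ i, ν i (g i)) ^ 2 / ∏ i, ν i (g i)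
      = ∑ g : ∀ i, D i,
        ((∑ S : Finset I, μt S * Φ S (fun i => g i.1) * ∏ i ∈ Sᶜ, ν i (g i)) ^ 2 / ∏ i, ν i (g i)
        - 2 * (∑ S : Finset I, μt S * Φ S (fun i => g i.1) * ∏ i ∈ Sᶜ, ν i (g i))
        + ∏ i, ν i (g i)) := Finset.sum_congr rfl fun g _ => expand2 g
    _ = (∑ g : ∀ i, D i,
          (∑ S : Finset I, μt S * Φ S (fun i => g i.1) * ∏ i ∈ Sᶜ, ν i (g i)) ^ 2 / ∏ i, ν i (g i))
        - 2 * (∑ g : ∀ i, D i,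
          ∑ S : Finset I, μt S * Φ S (fun i => g i.1) * ∏ i ∈ Sᶜ, ν i (g i))
        + ∑ g : ∀ i, D i, ∏ i, ν i (g i) := by
        rw [Finset.sum_add_distrib, Finset.sum_sub_distrib, Finset.mul_sum]
    _ = (∑ g : ∀ i, D i,
          (∑ S : Finset I, μt S * Φ S (fun i => g i.1) * ∏ i ∈ Sᶜ, ν i (g i)) ^ 2 / ∏ i, ν i (g i))
        - 1 := by rw [hμ'1, hν'1]; ring
    _ ≤ (∑ S : Finset I, ∑ S' : Finset I, μt S * μt S' * ∏ i ∈ S ∩ S', (m i)⁻¹) - 1 := by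
        linarith [hM]

def fullEquiv {Λ I : Type*} (part : Λ → I) :
    (Λ → Bool) ≃ ∀ i : I, ({v : Λ // part v = i} → Bool) where
  toFun x i v := x v.1
  invFun g v := g (part v) ⟨v, rfl⟩
  left_inv x := rfl
  right_inv g := by
    funext i v
    obtain ⟨v, hv⟩ := v
    subst hv
    rfl

def fiberEquivS {Λ I : Type*} (part : Λ → I) (S : Finset I) :
    ({v : Λ // part v ∈ S} → Bool) ≃ ∀ i : {i : I // i ∈ S}, ({v : Λ // part v = i.1} → Bool) where
  toFun y i v := y ⟨v.1, by rw [v.2]; exact i.2⟩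
  invFun a v := a ⟨part v.1, v.2⟩ ⟨v.1, rfl⟩
  left_inv y := rfl
  right_inv a := by
    have key : ∀ (i₁ i₂ : {i : I // i ∈ S}) (_ : i₁ = i₂)
        (w₁ : {v : Λ // part v = i₁.1}) (w₂ : {v : Λ // part v = i₂.1}),
        w₁.1 = w₂.1 → a i₁ w₁ = a i₂ w₂ := by
      rintro i₁ i₂ rfl w₁ w₂ hw
      rw [Subtype.ext hw]
    funext i v
    exact key _ _ (Subtype.ext v.2) _ _ rfl

/-- Miller–Peres type L² lemma: if `μ` is built by sampling a subset `S` of the parts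
(via `μ̃`), using an arbitrary law `φ S` on the parts in `S` and independent laws `ν i`
on the remaining parts, then `‖μ − ν‖²_{L²(ν)}` is bounded by
`∑_{S,S'} μ̃(S)μ̃(S') ∏_{i ∈ S ∩ S'} (min_{x_i} ν_i(x_i))⁻¹ − 1`. -/
theorem stmt_1 {Λ I : Type*} [Fintype Λ] [Fintype I] [DecidableEq I] [DecidableEq Λ]
    (part : Λ → I)
    (ν : ∀ i : I, ({v : Λ // part v = i} → Bool) → ℝ)
    (hνpos : ∀ i xi, 0 < ν i xi) (hν1 : ∀ i, ∑ xi, ν i xi = 1)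
    (μt : Finset I → ℝ) (hμt0 : ∀ S, 0 ≤ μt S) (hμt1 : ∑ S : Finset I, μt S = 1)
    (φ : ∀ S : Finset I, ({v : Λ // part v ∈ S} → Bool) → ℝ)
    (hφ0 : ∀ S y, 0 ≤ φ S y) (hφ1 : ∀ S, ∑ y, φ S y = 1)
    (μ : (Λ → Bool) → ℝ)
    (hμ : ∀ x, μ x = ∑ S : Finset I,
      μt S * φ S (fun v => x v.1) * ∏ i ∈ Sᶜ, ν i (fun v => x v.1))
    (νtot : (Λ → Bool) → ℝ)
    (hνtot : ∀ x, νtot x = ∏ i, ν i (fun v => x v.1)) :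
    ∑ x, (μ x - νtot x) ^ 2 / νtot x ≤
      (∑ S : Finset I, ∑ S' : Finset I,
        μt S * μt S' * ∏ i ∈ S ∩ S', (⨅ xi : {v : Λ // part v = i} → Bool, ν i xi)⁻¹) - 1 := by
  have key := aux_bound (I := I) (fun i => {v : Λ // part v = i} → Bool) ν hνpos hν1
    μt hμt0 hμt1
    (fun S a => φ S ((fiberEquivS part S).symm a))
    (fun S a => hφ0 S _)
    (fun S => by rw [Equiv.sum_comp (fiberEquivS part S).symm (φ S)]; exact hφ1 S)
  rw [← Equiv.sum_comp (fullEquiv part).symm (fun x => (μ x - νtot x) ^ 2 / νtot x)]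
  refine le_trans (le_of_eq ?_) key
  refine Fintype.sum_congr _ _ fun g => ?_
  have hres : ∀ i, (fun v : {v : Λ // part v = i} => (fullEquiv part).symm g v.1) = g i :=
    fun i => congrFun ((fullEquiv part).apply_symm_apply g) i
  have h1 : μ ((fullEquiv part).symm g) = ∑ S : Finset I,
      μt S * φ S ((fiberEquivS part S).symm fun i => g i.1) * ∏ i ∈ Sᶜ, ν i (g i) := by
    rw [hμ]
    refine Finset.sum_congr rfl fun S _ => ?_
    congr 1
    exact Finset.prod_congr rfl fun i _ => by rw [hres i]
  have h2 : νtot ((fullEquiv part).symm g) = ∏ i, ν i (g i) := by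
    rw [hνtot]
    exact Finset.prod_congr rfl fun i _ => by rw [hres i]
  rw [h1, h2]
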